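/- For every positive integer n: c_{n,1} = 2^{n-1}(n-2)+1, c_{n,2} = n(2^n(n-5)+4(n+1))/8, and c_{n,3} = n(n-1)(2^n(n-8)+4n(n-1)+16)/48, where c_{n,k} = Σ_{i=2k}^{n} ((n-i+1)/(n+1)) · (n+1)!/(k!·(i-2k)!·(n+k-i+1)!). -/

import Mathlib

open Finset

/-- `c n k = Σ_{i=2k}^{n} ((n-i+1)/(n+1)) · (n+1)!/(k!·(i-2k)!·(n+k-i+1)!)`. -/
noncomputable def c (n k : ℕ) : ℚ :=
  ∑ i ∈ Finset.Icc (2 * k) n,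
    ((n : ℚ) - (i : ℚ) + 1) / ((n : ℚ) + 1) * (Nat.factorial (n + 1) : ℚ) /
      ((Nat.factorial k : ℚ) * (Nat.factorial (i - 2 * k) : ℚ) *
        (Nat.factorial (n + k - i + 1) : ℚ))

lemma sum_choose_q (N : ℕ) :
    ∑ j ∈ range (N+1), ((N.choose j : ℚ)) = 2^N := by
  have := Nat.sum_range_choose N
  exact_mod_cast congrArg (Nat.cast : ℕ → ℚ) this

lemma sum_jchoose_q (N : ℕ) :
    ∑ j ∈ range (N+1), (j:ℚ) * N.choose j = N * 2^N / 2 := by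
  cases N with
  | zero => simp
  | succ P =>
    rw [Finset.sum_range_succ']
    have h : ∀ j : ℕ, ((j+1 : ℕ):ℚ) * ((P+1).choose (j+1)) = (P+1) * (P.choose j) := by
      intro j
      have h3 : ((P+1) * P.choose j : ℕ) = ((P+1).choose (j+1) * (j+1) : ℕ) :=
        Nat.add_one_mul_choose_eq P j
      have h4 : (((P+1) * P.choose j : ℕ) : ℚ) = (((P+1).choose (j+1) * (j+1) : ℕ) : ℚ) := by
        exact_mod_cast h3
      push_cast at h4
      push_cast
      linarith
    rw [Finset.sum_congr rfl fun j _ => h j, ← Finset.mul_sum, sum_choose_q]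
    push_cast
    ring

lemma sum_lin_choose (A : ℚ) (N : ℕ) :
    ∑ j ∈ range (N+1), (A - j) * N.choose j = A * 2^N - N * 2^N / 2 := by
  simp_rw [sub_mul]
  rw [Finset.sum_sub_distrib, ← Finset.mul_sum, sum_choose_q, sum_jchoose_q]

lemma choose_sub_two_q (m : ℕ) : (((m+2).choose m : ℚ)) = (m+2)*(m+1)/2 := by
  induction m with
  | zero => simp
  | succ p ih =>
    have : (p+1+2).choose (p+1) = (p+2).choose p + (p+2).choose (p+1) :=
      Nat.choose_succ_succ (p+2) p
    rw [this]
    push_cast [ih, Nat.choose_succ_self_right]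
    ring

lemma psum1 (m : ℕ) :
    ∑ j ∈ range (m+1), (((m:ℚ)+1) - j) * ((m+2).choose j)
      = 2^(m+1) * m + 1 := by
  have full := sum_lin_choose ((m:ℚ)+1) (m+2)
  rw [show m+2+1 = (m+2)+1 from rfl, Finset.sum_range_succ,
    show m+2 = (m+1)+1 from rfl, Finset.sum_range_succ] at full
  simp only [Nat.choose_self, Nat.choose_succ_self_right] at full
  push_cast at full
  linear_combination full

lemma psum2 (m : ℕ) :
    ∑ j ∈ range (m+1), (((m:ℚ)+1) - j) * ((m+3).choose j)
      = 2^(m+2) * ((m:ℚ)-1) + (m+5) := by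
  have full := sum_lin_choose ((m:ℚ)+1) (m+3)
  rw [show m+3+1 = (m+3)+1 from rfl, Finset.sum_range_succ,
    show m+3 = (m+2)+1 from rfl, Finset.sum_range_succ,
    show m+2 = (m+1)+1 from rfl, Finset.sum_range_succ] at full
  simp only [Nat.choose_self, Nat.choose_succ_self_right] at full
  have hsym : (m+3).choose (m+1) = (m+1+2).choose (m+1) := rfl
  rw [show ((m+3).choose (m+1) : ℚ) = ((m+1+2).choose (m+1) : ℚ) from rfl,
    choose_sub_two_q (m+1)] at full
  push_cast at full
  linear_combination full

lemma psum3 (m : ℕ) :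
    ∑ j ∈ range (m+1), (((m:ℚ)+1) - j) * ((m+4).choose j)
      = 2^(m+3) * ((m:ℚ)-2) + ((m:ℚ)+4)*((m:ℚ)+3)/2 + 2*(m+4) + 3 := by
  have full := sum_lin_choose ((m:ℚ)+1) (m+4)
  rw [show m+4+1 = (m+4)+1 from rfl, Finset.sum_range_succ,
    show m+4 = (m+3)+1 from rfl, Finset.sum_range_succ,
    show m+3 = (m+2)+1 from rfl, Finset.sum_range_succ,
    show m+2 = (m+1)+1 from rfl, Finset.sum_range_succ] at full
  simp only [Nat.choose_self, Nat.choose_succ_self_right] at full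
  rw [show ((m+4).choose (m+2) : ℚ) = ((m+2+2).choose (m+2) : ℚ) from rfl,
    choose_sub_two_q (m+2)] at full
  push_cast at full
  linear_combination full

lemma fact_ne (k : ℕ) : ((k.factorial : ℚ)) ≠ 0 :=
  Nat.cast_ne_zero.mpr (Nat.factorial_ne_zero k)

lemma c_eq_1 (m : ℕ) :
    c (m+2) 1 = ∑ j ∈ range (m+1), (((m:ℚ)+1) - j) * ((m+2).choose j) := by
  unfold c
  rw [← Finset.Ico_add_one_right_eq_Icc, Finset.sum_Ico_eq_sum_range,
    show m+2+1 - 2*1 = m+1 from by omega]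
  refine Finset.sum_congr rfl ?_
  intro j hj
  have hj' : j ≤ m := by simpa [Nat.lt_succ_iff] using hj
  rw [show 2*1 + j - 2*1 = j from by omega,
    show m+2+1 - (2*1+j) + 1 = m+2-j from by omega,
    Nat.cast_choose (K := ℚ) (show j ≤ m+2 by omega),
    show (m+2)+1 = (m+2)+1 from rfl, Nat.factorial_succ (m+2)]
  have e1 := fact_ne (m+2)
  have e2 := fact_ne j
  have e3 := fact_ne (m+2-j)
  have e4 : ((m:ℚ)+2) + 1 ≠ 0 := by positivity
  push_cast
  field_simp
  ring

lemma c_eq_2 (m : ℕ) :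
    c (m+4) 2 = ((m:ℚ)+4)/2 *
      ∑ j ∈ range (m+1), (((m:ℚ)+1) - j) * ((m+3).choose j) := by
  unfold c
  rw [← Finset.Ico_add_one_right_eq_Icc, Finset.sum_Ico_eq_sum_range,
    show m+4+1 - 2*2 = m+1 from by omega, Finset.mul_sum]
  refine Finset.sum_congr rfl ?_
  intro j hj
  have hj' : j ≤ m := by simpa [Nat.lt_succ_iff] using hj
  rw [show 2*2 + j - 2*2 = j from by omega,
    show m+4+2 - (2*2+j) + 1 = m+3-j from by omega,
    Nat.cast_choose (K := ℚ) (show j ≤ m+3 by omega),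
    show (m+4)+1 = (m+3)+1+1 from rfl, Nat.factorial_succ (m+3+1),
    Nat.factorial_succ (m+3)]
  have e1 := fact_ne (m+3)
  have e2 := fact_ne j
  have e3 := fact_ne (m+3-j)
  have e4 : ((m:ℚ)+4) + 1 ≠ 0 := by positivity
  push_cast
  simp only [Nat.factorial_two]
  field_simp
  ring

lemma c_eq_3 (m : ℕ) :
    c (m+6) 3 = ((m:ℚ)+6)*((m:ℚ)+5)/6 *
      ∑ j ∈ range (m+1), (((m:ℚ)+1) - j) * ((m+4).choose j) := by
  unfold c
  rw [← Finset.Ico_add_one_right_eq_Icc, Finset.sum_Ico_eq_sum_range,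
    show m+6+1 - 2*3 = m+1 from by omega, Finset.mul_sum]
  refine Finset.sum_congr rfl ?_
  intro j hj
  have hj' : j ≤ m := by simpa [Nat.lt_succ_iff] using hj
  rw [show 2*3 + j - 2*3 = j from by omega,
    show m+6+3 - (2*3+j) + 1 = m+4-j from by omega,
    Nat.cast_choose (K := ℚ) (show j ≤ m+4 by omega),
    show (m+6)+1 = (m+4)+1+1+1 from rfl, Nat.factorial_succ (m+4+1+1),
    Nat.factorial_succ (m+4+1), Nat.factorial_succ (m+4)]
  have e1 := fact_ne (m+4)
  have e2 := fact_ne j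
  have e3 := fact_ne (m+4-j)
  have e4 : ((m:ℚ)+6) + 1 ≠ 0 := by positivity
  push_cast
  rw [show (Nat.factorial 3 : ℚ) = 6 from by norm_num [Nat.factorial]]
  field_simp
  ring

theorem stmt16 (n : ℕ) (hn : 1 ≤ n) :
    c n 1 = 2 ^ (n - 1) * ((n : ℚ) - 2) + 1 ∧
    c n 2 = (n : ℚ) * (2 ^ n * ((n : ℚ) - 5) + 4 * ((n : ℚ) + 1)) / 8 ∧
    c n 3 = (n : ℚ) * ((n : ℚ) - 1) *
      (2 ^ n * ((n : ℚ) - 8) + 4 * (n : ℚ) * ((n : ℚ) - 1) + 16) / 48 := by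
  refine ⟨?_, ?_, ?_⟩
  · rcases Nat.lt_or_ge n 2 with h | h
    · have hn1 : n = 1 := by omega
      subst hn1
      have hc : c 1 1 = 0 := by
        unfold c; rw [Finset.Icc_eq_empty (by omega)]; simp
      rw [hc]; norm_num
    · obtain ⟨m, rfl⟩ : ∃ m, n = m + 2 := ⟨n - 2, by omega⟩
      rw [c_eq_1, psum1, show m+2-1 = m+1 from rfl]
      push_cast; ring
  · rcases Nat.lt_or_ge n 4 with h | h
    · have hc : c n 2 = 0 := by
        unfold c; rw [Finset.Icc_eq_empty (by omega)]; simp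
      rw [hc]
      interval_cases n <;> norm_num
    · obtain ⟨m, rfl⟩ : ∃ m, n = m + 4 := ⟨n - 4, by omega⟩
      rw [c_eq_2, psum2]
      push_cast; ring
  · rcases Nat.lt_or_ge n 6 with h | h
    · have hc : c n 3 = 0 := by
        unfold c; rw [Finset.Icc_eq_empty (by omega)]; simp
      rw [hc]
      interval_cases n <;> norm_num
    · obtain ⟨m, rfl⟩ : ∃ m, n = m + 6 := ⟨n - 6, by omega⟩
      rw [c_eq_3, psum3]
      push_cast; ring
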